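/- Let Ψ : L²(𝕋ⁿ) → L²(𝕋ⁿ) be the unitary operator (Ψf)(ζ) = J(ζ)·f(τ(ζ)), where τ(ζ) = (ζ₁ζ₂⋯ζₙ, ζ₂ζ₃⋯ζₙ, …, ζ_{n−1}ζₙ, ζₙ) and J(ζ) = ∏_{j=2}^{n} ζ_j^{j−1}. Let P be the orthogonal projection of L²(𝕋ⁿ) onto H²(∂_d△ₙ) and Q the orthogonal projection of L²(𝕋ⁿ) onto H²(∂_d𝔻ⁿ). Then Ψ P Ψ⁻¹ = Q. -/

import Mathlib

open MeasureTheory Filter Topology ComplexConjugate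

noncomputable section

instance fact_one_pos : Fact ((0:ℝ) < 1) := ⟨one_pos⟩

abbrev Torus (n : ℕ) := Fin n → AddCircle (1 : ℝ)

abbrev L2T (n : ℕ) := Lp ℂ 2 (volume : Measure (Torus n))

abbrev LinfT (n : ℕ) := Lp ℂ ⊤ (volume : Measure (Torus n))

def char {n : ℕ} (α : Fin n → ℤ) : Torus n → ℂ := fun x => ∏ j, fourier (α j) (x j)

lemma char_continuous {n : ℕ} (α : Fin n → ℤ) : Continuous (char α) :=
  continuous_finsetProd _ fun j _ => (fourier (α j)).continuous.comp (continuous_apply j)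

lemma char_memLp {n : ℕ} (α : Fin n → ℤ) (p : ENNReal) :
    MemLp (char α) p (volume : Measure (Torus n)) := by
  refine (memLp_top_of_bound ((char_continuous α).aestronglyMeasurable) 1 ?_).mono_exponent le_top
  filter_upwards with x
  simp only [char, norm_prod]
  calc ∏ j, ‖fourier (α j) (x j)‖
      = ∏ j : Fin n, (1:ℝ) := by
        refine Finset.prod_congr rfl fun j _ => ?_
        rw [fourier_apply]; exact Circle.norm_coe _
    _ ≤ 1 := by simp

def charL2 {n : ℕ} (α : Fin n → ℤ) : L2T n := (char_memLp α 2).toLp (char α)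

def hardyT (n : ℕ) : Submodule ℂ (L2T n) :=
  (Submodule.span ℂ
    (charL2 '' {α : Fin n → ℤ | ∀ k : Fin n, 0 ≤ (∑ j ∈ Finset.Iic k, α j) + (k.val : ℤ)})).topologicalClosure

def hardyD (n : ℕ) : Submodule ℂ (L2T n) :=
  (Submodule.span ℂ (charL2 '' {α : Fin n → ℤ | ∀ j, 0 ≤ α j})).topologicalClosure

instance hardyT.completeSpace (n : ℕ) : CompleteSpace (hardyT n) :=
  (Submodule.isClosed_topologicalClosure _).completeSpace_coe

instance hardyD.completeSpace (n : ℕ) : CompleteSpace (hardyD n) :=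
  (Submodule.isClosed_topologicalClosure _).completeSpace_coe

def IsToeplitzOn {n : ℕ} (K : Submodule ℂ (L2T n)) (φ : Torus n → ℂ) (T : K →L[ℂ] K) : Prop :=
  ∀ f g : K,
    (inner ℂ ((g : L2T n)) ((T f : L2T n)) : ℂ) =
      ∫ x, conj ((g : L2T n) x) * (φ x * (f : L2T n) x) ∂volume

def IsCoordMult {n : ℕ} (j : Fin n) (M : hardyT n →L[ℂ] hardyT n) : Prop :=
  ∀ f : hardyT n,
    ((M f : L2T n) : Torus n → ℂ) =ᵐ[volume]
      fun x => fourier 1 (x j) * ((f : L2T n) : Torus n → ℂ) x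

def IsHankelT {n : ℕ} (φ : Torus n → ℂ) (H : hardyT n →L[ℂ] L2T n) : Prop :=
  (∀ f : hardyT n, H f ∈ (hardyT n)ᗮ) ∧
    ∀ f : hardyT n, ∀ g : L2T n, g ∈ (hardyT n)ᗮ →
      (inner ℂ g (H f) : ℂ) = ∫ x, conj (g x) * (φ x * (f : L2T n) x) ∂volume

def IsAnalyticSymbolF {n : ℕ} (φ : Torus n → ℂ) : Prop :=
  ∀ α : Fin n → ℤ, (¬ ∀ k : Fin n, 0 ≤ ∑ j ∈ Finset.Iic k, α j) →
    ∫ x, φ x * char (-α) x ∂(volume : Measure (Torus n)) = 0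

def IsInnerSymbolF {n : ℕ} (φ : Torus n → ℂ) : Prop :=
  IsAnalyticSymbolF φ ∧ ∀ᵐ x ∂(volume : Measure (Torus n)), ‖φ x‖ = 1

def tauMap {n : ℕ} (x : Torus n) : Torus n := fun j => ∑ k ∈ Finset.Ici j, x k

def sigmaMap {n : ℕ} (x : Torus n) : Torus n :=
  fun j => if h : (j : ℕ) + 1 < n then x j - x ⟨(j : ℕ) + 1, h⟩ else x j

def jacF {n : ℕ} (x : Torus n) : ℂ := ∏ j : Fin n, fourier (j.val : ℤ) (x j)

def jacInvF {n : ℕ} (x : Torus n) : ℂ :=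
  ∏ j : Fin n, fourier (if j.val = 0 then (0 : ℤ) else -1) (x j)


/-! ### Auxiliary lemmas -/

section Aux

lemma fourier_add_apply {T : ℝ} (m : ℤ) (x y : AddCircle T) :
    fourier m (x + y) = fourier m x * fourier m y := by
  rw [fourier_apply, fourier_apply, fourier_apply, smul_add, AddCircle.toCircle_add]
  simp

lemma fourier_sum_apply {T : ℝ} {ι : Type*} (s : Finset ι) (m : ℤ) (f : ι → AddCircle T) :
    fourier m (∑ i ∈ s, f i) = ∏ i ∈ s, fourier m (f i) := by
  classical
  induction s using Finset.induction with
  | empty => simp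
  | insert a s h ih => rw [Finset.sum_insert h, Finset.prod_insert h, fourier_add_apply, ih]

lemma fourier_sum_index {T : ℝ} {ι : Type*} (s : Finset ι) (g : ι → ℤ) (x : AddCircle T) :
    fourier (∑ i ∈ s, g i) x = ∏ i ∈ s, fourier (g i) x := by
  classical
  induction s using Finset.induction with
  | empty => simp
  | insert a s h ih => rw [Finset.sum_insert h, Finset.prod_insert h, fourier_add, ih]

def deltaMap {n : ℕ} (α : Fin n → ℤ) : Fin n → ℤ :=
  fun k => (k.val : ℤ) + ∑ j ∈ Finset.Iic k, α j

lemma jac_char_tau {n : ℕ} (α : Fin n → ℤ) (x : Torus n) :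
    jacF x * char α (tauMap x) = char (deltaMap α) x := by
  have h1 : char α (tauMap x) = ∏ k : Fin n, ∏ j ∈ Finset.Iic k, fourier (α j) (x k) := by
    rw [char]
    calc ∏ j : Fin n, fourier (α j) (tauMap x j)
        = ∏ j : Fin n, ∏ k ∈ Finset.Ici j, fourier (α j) (x k) :=
          Finset.prod_congr rfl fun j _ => fourier_sum_apply _ _ _
      _ = ∏ k : Fin n, ∏ j ∈ Finset.Iic k, fourier (α j) (x k) :=
          Finset.prod_comm' (by simp)
  rw [h1, jacF, ← Finset.prod_mul_distrib]
  simp only [char, deltaMap]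
  refine Finset.prod_congr rfl fun k _ => ?_
  rw [fourier_add, fourier_sum_index]

lemma fin_Ici_eq_insert {n : ℕ} (j : Fin n) (h : (j : ℕ) + 1 < n) :
    Finset.Ici j = insert j (Finset.Ici (⟨(j : ℕ) + 1, h⟩ : Fin n)) := by
  ext k
  simp only [Finset.mem_Ici, Finset.mem_insert, Fin.le_def, Fin.ext_iff]
  omega

lemma fin_Ici_last {n : ℕ} (j : Fin n) (h : ¬ ((j : ℕ) + 1 < n)) :
    Finset.Ici j = {j} := by
  ext k
  have := k.isLt
  simp only [Finset.mem_Ici, Finset.mem_singleton, Fin.le_def, Fin.ext_iff]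
  omega

lemma sigma_tau {n : ℕ} (x : Torus n) : sigmaMap (tauMap x) = x := by
  funext j
  by_cases h : (j : ℕ) + 1 < n
  · have hnot : j ∉ Finset.Ici (⟨(j : ℕ) + 1, h⟩ : Fin n) := by
      simp [Finset.mem_Ici, Fin.le_def]
    simp only [sigmaMap, dif_pos h, tauMap, fin_Ici_eq_insert j h, Finset.sum_insert hnot]
    abel
  · simp only [sigmaMap, dif_neg h, tauMap, fin_Ici_last j h, Finset.sum_singleton]

lemma tau_sigma {n : ℕ} (x : Torus n) : tauMap (sigmaMap x) = x := by
  funext j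
  suffices H : ∀ m : ℕ, ∀ j : Fin n, n - (j : ℕ) = m + 1 → tauMap (sigmaMap x) j = x j by
    exact H (n - (j : ℕ) - 1) j (by have := j.isLt; omega)
  intro m
  induction m with
  | zero =>
    intro j hj
    have h : ¬ ((j : ℕ) + 1 < n) := by omega
    simp only [tauMap, fin_Ici_last j h, Finset.sum_singleton, sigmaMap, dif_neg h]
  | succ m ih =>
    intro j hj
    have h : (j : ℕ) + 1 < n := by omega
    have hnot : j ∉ Finset.Ici (⟨(j : ℕ) + 1, h⟩ : Fin n) := by
      simp [Finset.mem_Ici, Fin.le_def]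
    have hstep : tauMap (sigmaMap x) j
        = sigmaMap x j + tauMap (sigmaMap x) (⟨(j : ℕ) + 1, h⟩ : Fin n) := by
      simp only [tauMap, fin_Ici_eq_insert j h, Finset.sum_insert hnot]
    rw [hstep, ih (⟨(j : ℕ) + 1, h⟩ : Fin n) (by simp only [Fin.val_mk]; omega)]
    simp only [sigmaMap, dif_pos h]
    abel

lemma continuous_tauMap {n : ℕ} : Continuous (tauMap (n := n)) :=
  continuous_pi fun _ => continuous_finset_sum _ fun k _ => continuous_apply k

lemma continuous_sigmaMap {n : ℕ} : Continuous (sigmaMap (n := n)) := by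
  refine continuous_pi fun j => ?_
  by_cases h : (j : ℕ) + 1 < n
  · simp only [sigmaMap, dif_pos h]
    exact (continuous_apply j).sub (continuous_apply _)
  · simp only [sigmaMap, dif_neg h]
    exact continuous_apply j

def tauEquiv (n : ℕ) : Torus n ≃+ Torus n where
  toFun := tauMap
  invFun := sigmaMap
  left_inv := sigma_tau
  right_inv := tau_sigma
  map_add' x y := by
    funext j
    simp [tauMap, Finset.sum_add_distrib]

lemma measurePreserving_tauMap {n : ℕ} :
    MeasurePreserving (tauMap (n := n)) volume volume := by
  haveI : IsProbabilityMeasure (volume : Measure (AddCircle (1 : ℝ))) :=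
    ⟨by simp [AddCircle.measure_univ]⟩
  haveI h1 : (volume : Measure (Torus n)).IsAddHaarMeasure := ⟨⟩
  haveI h2 : (Measure.map (tauMap (n := n)) volume).IsAddHaarMeasure :=
    (tauEquiv n).isAddHaarMeasure_map volume continuous_tauMap continuous_sigmaMap
  haveI h3 : IsProbabilityMeasure (Measure.map (tauMap (n := n)) volume) :=
    Measure.isProbabilityMeasure_map continuous_tauMap.measurable.aemeasurable
  exact ⟨continuous_tauMap.measurable,
    Measure.isAddHaarMeasure_eq_of_isProbabilityMeasure _ _⟩

lemma Psi_charL2 {n : ℕ} (Ψ : L2T n ≃ₗᵢ[ℂ] L2T n)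
    (hΨ : ∀ f : L2T n, (⇑(Ψ f) : Torus n → ℂ) =ᵐ[volume] fun x => jacF x * f (tauMap x))
    (α : Fin n → ℤ) : Ψ (charL2 α) = charL2 (deltaMap α) := by
  apply Lp.ext
  have h2 : ((⇑(charL2 α) : Torus n → ℂ) ∘ tauMap) =ᵐ[volume] ((char α : Torus n → ℂ) ∘ tauMap) :=
    measurePreserving_tauMap.quasiMeasurePreserving.ae_eq_comp
      ((char_memLp α 2).coeFn_toLp)
  have h3 : (⇑(Ψ (charL2 α)) : Torus n → ℂ) =ᵐ[volume] char (deltaMap α) := by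
    refine (hΨ (charL2 α)).trans ?_
    filter_upwards [h2] with x hx
    have hx' : (charL2 α : L2T n) (tauMap x) = char α (tauMap x) := hx
    rw [hx']
    exact jac_char_tau α x
  exact h3.trans ((char_memLp (deltaMap α) 2).coeFn_toLp).symm

def epsF {n : ℕ} (δ : Fin n → ℤ) : ℕ → ℤ :=
  fun m => if h : m < n then δ ⟨m, h⟩ - m else 0

def epsMap {n : ℕ} (δ : Fin n → ℤ) : Fin n → ℤ :=
  fun j => epsF δ j.val - (if j.val = 0 then 0 else epsF δ (j.val - 1))

lemma sum_Iic_epsMap {n : ℕ} (δ : Fin n → ℤ) (k : Fin n) :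
    ∑ j ∈ Finset.Iic k, epsMap δ j = epsF δ k.val := by
  have h1 : ∑ j ∈ Finset.Iic k, epsMap δ j
      = ∑ m ∈ Finset.Iic (k : ℕ), (epsF δ m - (if m = 0 then 0 else epsF δ (m - 1))) := by
    rw [← Fin.map_valEmbedding_Iic, Finset.sum_map]
    rfl
  have key : ∀ N : ℕ, N < n →
      ∑ m ∈ Finset.range (N + 1), (epsF δ m - (if m = 0 then 0 else epsF δ (m - 1))) = epsF δ N := by
    intro N
    induction N with
    | zero => intro _; simp
    | succ N ih =>
      intro hN
      rw [Finset.sum_range_succ, ih (by omega)]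
      simp only [Nat.succ_ne_zero, if_false, Nat.add_sub_cancel]
      ring
  rw [h1, show Finset.Iic (k : ℕ) = Finset.range ((k : ℕ) + 1) by
    ext m; simp [Nat.lt_succ_iff]]
  exact key (k : ℕ) k.isLt

lemma deltaMap_image {n : ℕ} :
    deltaMap '' {α : Fin n → ℤ | ∀ k : Fin n, 0 ≤ (∑ j ∈ Finset.Iic k, α j) + (k.val : ℤ)}
      = {δ : Fin n → ℤ | ∀ j, 0 ≤ δ j} := by
  ext δ
  constructor
  · rintro ⟨α, hα, rfl⟩ k
    have := hα k
    simp only [deltaMap]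
    omega
  · intro hδ
    refine ⟨epsMap δ, fun k => ?_, funext fun k => ?_⟩
    · rw [sum_Iic_epsMap]
      have hk : epsF δ (k : ℕ) = δ k - (k : ℕ) := by
        simp [epsF, k.isLt]
      rw [hk]
      have := hδ k
      omega
    · have hk : epsF δ (k : ℕ) = δ k - (k : ℕ) := by
        simp [epsF, k.isLt]
      simp only [deltaMap, sum_Iic_epsMap, hk]
      ring

lemma map_hardyT {n : ℕ} (Ψ : L2T n ≃ₗᵢ[ℂ] L2T n)
    (hΨ : ∀ f : L2T n, (⇑(Ψ f) : Torus n → ℂ) =ᵐ[volume] fun x => jacF x * f (tauMap x)) :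
    (hardyT n).map (Ψ.toLinearEquiv : L2T n →ₗ[ℂ] L2T n) = hardyD n := by
  have himg : (⇑Ψ) '' (charL2 '' {α : Fin n → ℤ |
        ∀ k : Fin n, 0 ≤ (∑ j ∈ Finset.Iic k, α j) + (k.val : ℤ)})
      = charL2 '' {α : Fin n → ℤ | ∀ j, 0 ≤ α j} := by
    rw [← deltaMap_image, ← Set.image_comp, ← Set.image_comp]
    exact Set.image_congr fun α _ => Psi_charL2 Ψ hΨ α
  apply SetLike.ext'
  have hcoe : ((hardyT n).map (Ψ.toLinearEquiv : L2T n →ₗ[ℂ] L2T n) : Set (L2T n))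
      = (⇑Ψ) '' (hardyT n : Set (L2T n)) := rfl
  rw [hcoe, hardyT, hardyD, Submodule.topologicalClosure_coe, Submodule.topologicalClosure_coe,
    show (⇑Ψ : L2T n → L2T n) = ⇑Ψ.toHomeomorph from rfl, Ψ.toHomeomorph.image_closure]
  congr 1
  rw [show (⇑Ψ.toHomeomorph : L2T n → L2T n) = ⇑Ψ from rfl]
  have : (⇑Ψ) '' ((Submodule.span ℂ (charL2 '' {α : Fin n → ℤ |
        ∀ k : Fin n, 0 ≤ (∑ j ∈ Finset.Iic k, α j) + (k.val : ℤ)})) : Set (L2T n))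
      = ((Submodule.span ℂ (charL2 '' {α : Fin n → ℤ |
        ∀ k : Fin n, 0 ≤ (∑ j ∈ Finset.Iic k, α j) + (k.val : ℤ)})).map
          (Ψ.toLinearEquiv : L2T n →ₗ[ℂ] L2T n) : Set (L2T n)) := rfl
  rw [this, Submodule.map_span,
    show (⇑(Ψ.toLinearEquiv : L2T n →ₗ[ℂ] L2T n) : L2T n → L2T n) = ⇑Ψ from rfl, himg]

end Aux

/-- `Ψ P Ψ⁻¹ = Q`, where `P`, `Q` are the orthogonal projections of `L²(𝕋ⁿ)` onto
`H²(∂_d△ₙ)` and `H²(∂_d𝔻ⁿ)` respectively. -/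
theorem stmt8 {n : ℕ} (hn : 2 ≤ n) (Ψ : L2T n ≃ₗᵢ[ℂ] L2T n)
    (hΨ : ∀ f : L2T n, (⇑(Ψ f) : Torus n → ℂ) =ᵐ[volume] fun x => jacF x * f (tauMap x)) :
    ∀ f : L2T n,
      Ψ ((Submodule.orthogonalProjectionOnto (hardyT n) (Ψ.symm f) : L2T n)) =
        (Submodule.orthogonalProjectionOnto (hardyD n) f : L2T n) := by
  intro f
  have hmap := map_hardyT Ψ hΨ
  symm
  refine Submodule.eq_starProjection_of_mem_of_inner_eq_zero ?_ ?_
  · rw [← hmap]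
    exact ⟨_, (Submodule.orthogonalProjectionOnto (hardyT n) (Ψ.symm f)).2, rfl⟩
  · intro w hw
    rw [← hmap] at hw
    obtain ⟨w', hw', rfl⟩ := hw
    have hsub : f - Ψ ((Submodule.orthogonalProjectionOnto (hardyT n) (Ψ.symm f) : L2T n))
        = Ψ (Ψ.symm f - (Submodule.orthogonalProjectionOnto (hardyT n) (Ψ.symm f) : L2T n)) := by
      rw [map_sub, Ψ.apply_symm_apply]
    rw [hsub, show (Ψ.toLinearEquiv : L2T n →ₗ[ℂ] L2T n) w' = Ψ w' from rfl,
      Ψ.inner_map_map]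
    exact Submodule.starProjection_inner_eq_zero _ w' hw'
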